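/- For all typical weights λ, μ, the operator T_{λ,μ} : L(λ)⊗L(μ) → L(μ)⊗L(λ) is an F-linear isomorphism and is equivariant: T_{λ,μ}∘Δ_{λ,μ}(E) = Δ_{μ,λ}(E)∘T_{λ,μ}, T_{λ,μ}∘Δ_{λ,μ}(F) = Δ_{μ,λ}(F)∘T_{λ,μ}, and T_{λ,μ}∘Δ_{λ,μ}(Q(h)) = Δ_{μ,λ}(Q(h))∘T_{λ,μ} for every h ∈ ℤ². (This expresses that the braiding Ř = T⁻¹ is a U_q(gl(1|1))-module homomorphism.) -/

import Mathlib

set_option synthInstance.maxHeartbeats 1000000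
set_option maxHeartbeats 1000000
noncomputable section
open scoped TensorProduct

abbrev F : Type := RatFunc ℂ
def q : F := RatFunc.X

/-- The quantum integer [n] = (qⁿ − q⁻ⁿ)/(q − q⁻¹). -/
def qn (n : ℤ) : F := (q ^ n - q ^ (-n)) / (q - q⁻¹)

abbrev V : Type := Fin 2 → F
def v0 : V := Pi.single 0 1
def v1 : V := Pi.single 1 1

def Eop : V →ₗ[F] V := Matrix.toLin' !![0, 1; 0, 0]
def Fop (l : ℤ × ℤ) : V →ₗ[F] V := Matrix.toLin' !![0, 0; qn (l.1 + l.2), 0]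
def Qop (l : ℤ × ℤ) (h : ℤ × ℤ) : V →ₗ[F] V :=
  Matrix.toLin' !![q ^ (h.1 * l.1 + h.2 * l.2), 0; 0, q ^ (h.1 * (l.1 - 1) + h.2 * (l.2 + 1))]
def Pop (l : ℤ × ℤ) : V →ₗ[F] V :=
  Matrix.toLin' !![(-1 : F) ^ l.2, 0; 0, (-1 : F) ^ (l.2 + 1)]
def Kop (l : ℤ × ℤ) : V →ₗ[F] V := Qop l (1, 1)
def Kinv (l : ℤ × ℤ) : V →ₗ[F] V := Qop l (-1, -1)

def ΔE (l m : ℤ × ℤ) : V ⊗[F] V →ₗ[F] V ⊗[F] V :=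
  TensorProduct.map Eop (Kinv m) + TensorProduct.map (Pop l) Eop
def ΔF (l m : ℤ × ℤ) : V ⊗[F] V →ₗ[F] V ⊗[F] V :=
  TensorProduct.map (Fop l) LinearMap.id + TensorProduct.map (Kop l ∘ₗ Pop l) (Fop m)
def ΔQ (l m : ℤ × ℤ) (h : ℤ × ℤ) : V ⊗[F] V →ₗ[F] V ⊗[F] V :=
  TensorProduct.map (Qop l h) (Qop m h)

def bV : Module.Basis (Fin 2) F V := Pi.basisFun F (Fin 2)
def bVV : Module.Basis (Fin 2 × Fin 2) F (V ⊗[F] V) := Module.Basis.tensorProduct bV bV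

/-- `(λ,μ) = λ₁μ₁ − λ₂μ₂`. -/
def pr (a b : ℤ × ℤ) : ℤ := a.1 * b.1 - a.2 * b.2
/-- `λ − α`. -/
def am (a : ℤ × ℤ) : ℤ × ℤ := (a.1 - 1, a.2 + 1)

/-- The operator `T_{λ,μ} : L(λ)⊗L(μ) → L(μ)⊗L(λ)` (the inverse braiding `Ř⁻¹`),
defined on the basis `v_i ⊗ v_j`; in each output the first factor lies in `L(μ)`. -/
def Tmap (l m : ℤ × ℤ) : V ⊗[F] V →ₗ[F] V ⊗[F] V :=
  bVV.constr F fun p =>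
    !![ ((-1 : F) ^ (l.2 * m.2) * q ^ (-(pr m l))) • (v0 ⊗ₜ[F] v0),
        ((-1 : F) ^ (l.2 * (m.2 + 1)) * q ^ (-(pr (am m) l))) • (v1 ⊗ₜ[F] v0) ;
        ((-1 : F) ^ ((l.2 + 1) * m.2)) •
          ( (q ^ (-(pr m (am l)))) • (v0 ⊗ₜ[F] v1)
            + ((-1 : F) ^ m.2 * q ^ (-(pr (am m) l)) * (q⁻¹ - q) * qn (m.1 + m.2))
              • (v1 ⊗ₜ[F] v0) ),
        ((-1 : F) ^ ((l.2 + 1) * (m.2 + 1)) * q ^ (-(pr (am m) (am l)))) • (v1 ⊗ₜ[F] v1) ]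
      p.1 p.2


-- ================= auxiliary scalar lemmas =================
lemma hq : q ≠ 0 := RatFunc.X_ne_zero
lemma hs : (-1 : F) ≠ 0 := by norm_num
lemma qq (a b : ℤ) : q ^ a * q ^ b = q ^ (a + b) := (zpow_add₀ hq a b).symm
lemma ss (a b : ℤ) : (-1:F) ^ a * (-1:F) ^ b = (-1:F) ^ (a + b) := (zpow_add₀ hs a b).symm
lemma qqm (a b : ℤ) (x : F) : q ^ a * (q ^ b * x) = q ^ (a + b) * x := by
  rw [← mul_assoc, qq]
lemma ssm (a b : ℤ) (x : F) : (-1:F) ^ a * ((-1:F) ^ b * x) = (-1:F) ^ (a + b) * x := by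
  rw [← mul_assoc, ss]
lemma sq2 (a : ℤ) : (-1:F) ^ (2 * a) = 1 := by rw [zpow_mul]; norm_num
lemma se {a b : ℤ} (h : (2:ℤ) ∣ (a - b)) : (-1:F) ^ a = (-1:F) ^ b := by
  obtain ⟨k, hk⟩ := h
  have ha : a = 2 * k + b := by omega
  rw [ha, ← ss, sq2, one_mul]
lemma sqe {a b e f : ℤ} (h : (2:ℤ) ∣ (a - b)) (hef : e = f) :
    (-1:F) ^ a * q ^ e = (-1:F) ^ b * q ^ f := by rw [se h, hef]
lemma hden : q - q⁻¹ ≠ 0 := by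
  intro h
  have h1 : q = q⁻¹ := sub_eq_zero.mp h
  have h2 : q * q = 1 := by nth_rewrite 2 [h1]; exact mul_inv_cancel₀ hq
  have h3 : (algebraMap (Polynomial ℂ) F) (Polynomial.X * Polynomial.X) =
      (algebraMap (Polynomial ℂ) F) 1 := by
    simpa [q, RatFunc.algebraMap_X, map_mul] using h2
  have h4 := RatFunc.algebraMap_injective ℂ h3
  have h5 : (Polynomial.X : Polynomial ℂ) ^ 2 = 1 := by rw [pow_two]; exact h4
  have := congrArg Polynomial.natDegree h5
  simp [Polynomial.natDegree_X_pow] at this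
lemma qnD (n : ℤ) : (q⁻¹ - q) * qn n = q ^ (-n) - q ^ n := by
  have h1 : q⁻¹ - q = -(q - q⁻¹) := by ring
  rw [qn, h1, neg_mul, mul_div_assoc', mul_comm, mul_div_assoc, div_self hden, mul_one]
  ring
lemma keyqn (L M : ℤ) : qn M - (q^(2*L)) * qn M = q^L * ((q^(-M) - q^M) * qn L) := by
  have hL : (q : F) ^ L ≠ 0 := zpow_ne_zero _ hq
  have hM : (q : F) ^ M ≠ 0 := zpow_ne_zero _ hq
  rw [qn, qn, zpow_neg, zpow_neg, show (2*L : ℤ) = L*2 by ring, zpow_mul, zpow_two]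
  have hd := hden
  generalize hdd : q - q⁻¹ = d at hd ⊢
  generalize q ^ L = a at *
  generalize q ^ M = b at *
  field_simp
  ring

lemma qsm (e a f : ℤ) : q ^ e * ((-1:F) ^ a * q ^ f) = (-1:F) ^ a * q ^ (e + f) := by
  rw [mul_left_comm, qq]
lemma sps (a e b : ℤ) : (-1:F) ^ a * q ^ e * (-1:F) ^ b = (-1:F) ^ (a + b) * q ^ e := by
  rw [mul_right_comm, ss]
lemma mq (b f g e : ℤ) :
    ((-1:F) ^ b * (q ^ f - q ^ g)) * q ^ e = (-1:F) ^ b * (q ^ (f + e) - q ^ (g + e)) := by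
  rw [mul_assoc, sub_mul, qq, qq]
lemma mix (a e b f g : ℤ) :
    ((-1:F) ^ a * q ^ e) * ((-1:F) ^ b * (q ^ f - q ^ g))
      = (-1:F) ^ (a + b) * (q ^ (e + f) - q ^ (e + g)) := by
  rw [mul_mul_mul_comm, ss, mul_sub, qq, qq]
lemma mix' (b f g a e : ℤ) :
    ((-1:F) ^ b * (q ^ f - q ^ g)) * ((-1:F) ^ a * q ^ e)
      = (-1:F) ^ (b + a) * (q ^ (f + e) - q ^ (g + e)) := by
  rw [mul_mul_mul_comm, ss, sub_mul, qq, qq]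
lemma sneg (a : ℤ) : (-1:F) ^ (a + 1) = -((-1:F) ^ a) := by
  rw [← ss, zpow_one]; ring
lemma unit_smul {a e f : ℤ} (h : e + f = 0) (x : V ⊗[F] V) :
    ((-1:F) ^ a * q ^ e * ((-1:F) ^ a * q ^ f)) • x = x := by
  rw [mul_mul_mul_comm, ss, qq, h, zpow_zero, mul_one, ← two_mul, sq2, one_smul]
lemma diffcancel' {A B u w u' w' : ℤ} (h : (2:ℤ) ∣ B - A) (h1 : u' = w) (h2 : w' = u) :
    (-1:F) ^ A * (q ^ u - q ^ w) + (-1:F) ^ B * (q ^ u' - q ^ w') = 0 := by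
  rw [se h, h1, h2]; ring
lemma collect2 {x y : V ⊗[F] V} (a b c : F) :
    a • x + b • y + c • y = a • x + (b + c) • y := by
  rw [add_smul]; abel
lemma collectY {x y : V ⊗[F] V} (a b c : F) :
    a • x + (b • y + c • x) = b • y + (a + c) • x := by
  rw [add_smul]; abel
lemma keyqnP (P L M : ℤ) :
    qn L * (q ^ (L - P - M) - q ^ (L - P + M)) + q ^ (L + (L - P)) * qn M
      = q ^ (-P) * qn M := by
  rw [show (L - P - M : ℤ) = -P + (L + -M) by ring, ← qq (-P) (L + -M), ← qq L (-M),
      show (L - P + M : ℤ) = -P + (L + M) by ring, ← qq (-P) (L + M), ← qq L M,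
      show (L + (L - P) : ℤ) = -P + 2 * L by ring, ← qq (-P) (2 * L)]
  linear_combination (-(q ^ (-P)) : F) * keyqn L M
lemma keyqnQ (P L M : ℤ) :
    q ^ (L + (L + M - P)) * qn M
      = q ^ (M - P) * qn M - (q ^ (L - P - M + M) - q ^ (L - P + M + M)) * qn L := by
  rw [show (L - P - M + M : ℤ) = (M - P) + L + -M by ring, ← qq ((M - P) + L) (-M),
      ← qq (M - P) L,
      show (L - P + M + M : ℤ) = (M - P) + L + M by ring, ← qq ((M - P) + L) M,
      ← qq (M - P) L,
      show (L + (L + M - P) : ℤ) = (M - P) + 2 * L by ring, ← qq (M - P) (2 * L)]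
  linear_combination (-(q ^ (M - P)) : F) * keyqn L M

-- ================= basis lemmas =================
lemma b00 : bVV (0,0) = v0 ⊗ₜ[F] v0 := by
  rw [bVV, Module.Basis.tensorProduct_apply]; simp [bV, v0, v1]
lemma b01 : bVV (0,1) = v0 ⊗ₜ[F] v1 := by
  rw [bVV, Module.Basis.tensorProduct_apply]; simp [bV, v0, v1]
lemma b10 : bVV (1,0) = v1 ⊗ₜ[F] v0 := by
  rw [bVV, Module.Basis.tensorProduct_apply]; simp [bV, v0, v1]
lemma b11 : bVV (1,1) = v1 ⊗ₜ[F] v1 := by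
  rw [bVV, Module.Basis.tensorProduct_apply]; simp [bV, v0, v1]

-- ================= action lemmas =================
lemma E0 : Eop v0 = 0 := by
  funext i; fin_cases i <;> simp [Eop, v0, v1, Matrix.toLin'_apply, Matrix.mulVec_single]
lemma E1 : Eop v1 = v0 := by
  funext i; fin_cases i <;> simp [Eop, v0, v1, Matrix.toLin'_apply, Matrix.mulVec_single]
lemma F0 (l : ℤ × ℤ) : Fop l v0 = qn (l.1 + l.2) • v1 := by
  funext i; fin_cases i <;> simp [Fop, v0, v1, Matrix.toLin'_apply, Matrix.mulVec_single]
lemma F1 (l : ℤ × ℤ) : Fop l v1 = 0 := by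
  funext i; fin_cases i <;> simp [Fop, v0, v1, Matrix.toLin'_apply, Matrix.mulVec_single]
lemma Q0 (l h : ℤ × ℤ) : Qop l h v0 = q ^ (h.1 * l.1 + h.2 * l.2) • v0 := by
  funext i; fin_cases i <;> simp [Qop, v0, v1, Matrix.toLin'_apply, Matrix.mulVec_single]
lemma Q1 (l h : ℤ × ℤ) : Qop l h v1 = q ^ (h.1 * (l.1 - 1) + h.2 * (l.2 + 1)) • v1 := by
  funext i; fin_cases i <;> simp [Qop, v0, v1, Matrix.toLin'_apply, Matrix.mulVec_single]
lemma P0 (l : ℤ × ℤ) : Pop l v0 = ((-1:F) ^ l.2) • v0 := by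
  funext i; fin_cases i <;> simp [Pop, v0, v1, Matrix.toLin'_apply, Matrix.mulVec_single]
lemma P1 (l : ℤ × ℤ) : Pop l v1 = ((-1:F) ^ (l.2 + 1)) • v1 := by
  funext i; fin_cases i <;> simp [Pop, v0, v1, Matrix.toLin'_apply, Matrix.mulVec_single]
lemma K0 (l : ℤ × ℤ) : Kop l v0 = q ^ (l.1 + l.2) • v0 := by
  rw [Kop, Q0, show ((1,1):ℤ×ℤ).1 * l.1 + ((1,1):ℤ×ℤ).2 * l.2 = l.1 + l.2 by push_cast; ring]
lemma K1 (l : ℤ × ℤ) : Kop l v1 = q ^ (l.1 + l.2) • v1 := by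
  rw [Kop, Q1, show ((1,1):ℤ×ℤ).1 * (l.1 - 1) + ((1,1):ℤ×ℤ).2 * (l.2 + 1) = l.1 + l.2 by push_cast; ring]
lemma Ki0 (l : ℤ × ℤ) : Kinv l v0 = q ^ (-(l.1 + l.2)) • v0 := by
  rw [Kinv, Q0, show ((-1,-1):ℤ×ℤ).1 * l.1 + ((-1,-1):ℤ×ℤ).2 * l.2 = -(l.1 + l.2) by push_cast; ring]
lemma Ki1 (l : ℤ × ℤ) : Kinv l v1 = q ^ (-(l.1 + l.2)) • v1 := by
  rw [Kinv, Q1, show ((-1,-1):ℤ×ℤ).1 * (l.1 - 1) + ((-1,-1):ℤ×ℤ).2 * (l.2 + 1) = -(l.1 + l.2) by push_cast; ring]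

-- ================= Delta application lemmas =================
lemma dE00 (l m : ℤ × ℤ) : ΔE l m (v0 ⊗ₜ[F] v0) = 0 := by
  simp [ΔE, TensorProduct.map_tmul, E0, E1, Ki0, Ki1, P0, P1]
lemma dE01 (l m : ℤ × ℤ) : ΔE l m (v0 ⊗ₜ[F] v1) = ((-1:F) ^ l.2) • (v0 ⊗ₜ[F] v0) := by
  simp only [ΔE, LinearMap.add_apply, TensorProduct.map_tmul, E0, E1, Ki0, Ki1, P0, P1,
    map_smul, ← TensorProduct.smul_tmul', TensorProduct.tmul_smul,
    TensorProduct.zero_tmul, TensorProduct.tmul_zero, smul_zero, zero_add, add_zero, smul_smul]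
lemma dE10 (l m : ℤ × ℤ) : ΔE l m (v1 ⊗ₜ[F] v0) = (q ^ (-(m.1 + m.2))) • (v0 ⊗ₜ[F] v0) := by
  simp only [ΔE, LinearMap.add_apply, TensorProduct.map_tmul, E0, E1, Ki0, Ki1, P0, P1,
    map_smul, ← TensorProduct.smul_tmul', TensorProduct.tmul_smul,
    TensorProduct.zero_tmul, TensorProduct.tmul_zero, smul_zero, zero_add, add_zero, smul_smul]
lemma dE11 (l m : ℤ × ℤ) : ΔE l m (v1 ⊗ₜ[F] v1) =
    (q ^ (-(m.1 + m.2))) • (v0 ⊗ₜ[F] v1) + ((-1:F) ^ (l.2 + 1)) • (v1 ⊗ₜ[F] v0) := by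
  simp only [ΔE, LinearMap.add_apply, TensorProduct.map_tmul, E0, E1, Ki0, Ki1, P0, P1,
    map_smul, ← TensorProduct.smul_tmul', TensorProduct.tmul_smul,
    TensorProduct.zero_tmul, TensorProduct.tmul_zero, smul_zero, zero_add, add_zero, smul_smul]
lemma dF00 (l m : ℤ × ℤ) : ΔF l m (v0 ⊗ₜ[F] v0) =
    qn (l.1 + l.2) • (v1 ⊗ₜ[F] v0)
    + ((-1:F) ^ l.2 * (q ^ (l.1 + l.2) * qn (m.1 + m.2))) • (v0 ⊗ₜ[F] v1) := by
  simp only [ΔF, LinearMap.add_apply, TensorProduct.map_tmul, LinearMap.comp_apply,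
    LinearMap.id_apply, F0, F1, P0, P1, map_smul, K0, K1, ← TensorProduct.smul_tmul',
    TensorProduct.tmul_smul, smul_smul, TensorProduct.zero_tmul, TensorProduct.tmul_zero,
    smul_zero, zero_add, add_zero]
  congr 1
  congr 1
  ring
lemma dF01 (l m : ℤ × ℤ) : ΔF l m (v0 ⊗ₜ[F] v1) = qn (l.1 + l.2) • (v1 ⊗ₜ[F] v1) := by
  simp only [ΔF, LinearMap.add_apply, TensorProduct.map_tmul, LinearMap.comp_apply,
    LinearMap.id_apply, F0, F1, P0, P1, map_smul, K0, K1, ← TensorProduct.smul_tmul',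
    TensorProduct.tmul_smul, smul_smul, TensorProduct.zero_tmul, TensorProduct.tmul_zero,
    smul_zero, zero_add, add_zero]
lemma dF10 (l m : ℤ × ℤ) : ΔF l m (v1 ⊗ₜ[F] v0) =
    ((-1:F) ^ (l.2 + 1) * (q ^ (l.1 + l.2) * qn (m.1 + m.2))) • (v1 ⊗ₜ[F] v1) := by
  simp only [ΔF, LinearMap.add_apply, TensorProduct.map_tmul, LinearMap.comp_apply,
    LinearMap.id_apply, F0, F1, P0, P1, map_smul, K0, K1, ← TensorProduct.smul_tmul',
    TensorProduct.tmul_smul, smul_smul, TensorProduct.zero_tmul, TensorProduct.tmul_zero,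
    smul_zero, zero_add, add_zero]
  congr 1
  ring
lemma dF11 (l m : ℤ × ℤ) : ΔF l m (v1 ⊗ₜ[F] v1) = 0 := by
  simp [ΔF, TensorProduct.map_tmul, F0, F1, P0, P1, K0, K1, TensorProduct.tmul_smul]
lemma dQ00 (l m h : ℤ × ℤ) : ΔQ l m h (v0 ⊗ₜ[F] v0) =
    (q ^ (h.1 * l.1 + h.2 * l.2) * q ^ (h.1 * m.1 + h.2 * m.2)) • (v0 ⊗ₜ[F] v0) := by
  simp only [ΔQ, TensorProduct.map_tmul, Q0, Q1, ← TensorProduct.smul_tmul',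
    TensorProduct.tmul_smul, smul_smul]
  rw [mul_comm]
lemma dQ01 (l m h : ℤ × ℤ) : ΔQ l m h (v0 ⊗ₜ[F] v1) =
    (q ^ (h.1 * l.1 + h.2 * l.2) * q ^ (h.1 * (m.1 - 1) + h.2 * (m.2 + 1))) • (v0 ⊗ₜ[F] v1) := by
  simp only [ΔQ, TensorProduct.map_tmul, Q0, Q1, ← TensorProduct.smul_tmul',
    TensorProduct.tmul_smul, smul_smul]
  rw [mul_comm]
lemma dQ10 (l m h : ℤ × ℤ) : ΔQ l m h (v1 ⊗ₜ[F] v0) =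
    (q ^ (h.1 * (l.1 - 1) + h.2 * (l.2 + 1)) * q ^ (h.1 * m.1 + h.2 * m.2)) • (v1 ⊗ₜ[F] v0) := by
  simp only [ΔQ, TensorProduct.map_tmul, Q0, Q1, ← TensorProduct.smul_tmul',
    TensorProduct.tmul_smul, smul_smul]
  rw [mul_comm]
lemma dQ11 (l m h : ℤ × ℤ) : ΔQ l m h (v1 ⊗ₜ[F] v1) =
    (q ^ (h.1 * (l.1 - 1) + h.2 * (l.2 + 1)) * q ^ (h.1 * (m.1 - 1) + h.2 * (m.2 + 1)))
      • (v1 ⊗ₜ[F] v1) := by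
  simp only [ΔQ, TensorProduct.map_tmul, Q0, Q1, ← TensorProduct.smul_tmul',
    TensorProduct.tmul_smul, smul_smul]
  rw [mul_comm]

-- ================= T application lemmas (canonical forms) =================
lemma T00 (l m : ℤ × ℤ) : Tmap l m (v0 ⊗ₜ[F] v0) =
    ((-1:F) ^ (l.2 * m.2) * q ^ (-(m.1 * l.1 - m.2 * l.2))) • (v0 ⊗ₜ[F] v0) := by
  conv_lhs => rw [← b00]
  simp only [Tmap, Module.Basis.constr_basis]
  simp only [Matrix.of_apply, Matrix.cons_val', Matrix.cons_val_zero, Matrix.cons_val_one, Matrix.head_cons,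
    Matrix.empty_val', Matrix.cons_val_fin_one, Matrix.head_fin_const]
  try congr 1
  try exact sqe ⟨0, by ring⟩ (by simp only [pr, am]; try ring)
lemma T01 (l m : ℤ × ℤ) : Tmap l m (v0 ⊗ₜ[F] v1) =
    ((-1:F) ^ (l.2 * m.2 + l.2) * q ^ (l.1 + l.2 - (m.1 * l.1 - m.2 * l.2))) • (v1 ⊗ₜ[F] v0) := by
  conv_lhs => rw [← b01]
  simp only [Tmap, Module.Basis.constr_basis]
  simp only [Matrix.of_apply, Matrix.cons_val', Matrix.cons_val_zero, Matrix.cons_val_one, Matrix.head_cons,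
    Matrix.empty_val', Matrix.cons_val_fin_one, Matrix.head_fin_const]
  try congr 1
  try exact sqe ⟨0, by ring⟩ (by simp only [pr, am]; try ring)
lemma T10 (l m : ℤ × ℤ) : Tmap l m (v1 ⊗ₜ[F] v0) =
    ((-1:F) ^ (l.2 * m.2 + m.2) * q ^ (m.1 + m.2 - (m.1 * l.1 - m.2 * l.2))) • (v0 ⊗ₜ[F] v1)
    + ((-1:F) ^ (l.2 * m.2) *
        (q ^ (l.1 + l.2 - (m.1 * l.1 - m.2 * l.2) - (m.1 + m.2))
         - q ^ (l.1 + l.2 - (m.1 * l.1 - m.2 * l.2) + (m.1 + m.2)))) • (v1 ⊗ₜ[F] v0) := by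
  conv_lhs => rw [← b10]
  simp only [Tmap, Module.Basis.constr_basis]
  simp only [Matrix.of_apply, Matrix.cons_val', Matrix.cons_val_zero, Matrix.cons_val_one, Matrix.head_cons,
    Matrix.empty_val', Matrix.cons_val_fin_one, Matrix.head_fin_const]
  rw [smul_add, smul_smul, smul_smul]
  congr 1
  · congr 1
    exact sqe ⟨0, by ring⟩ (by simp only [pr, am]; try ring)
  · congr 1
    rw [mul_assoc ((-1:F) ^ m.2 * q ^ (-(pr (am m) l))) (q⁻¹ - q) (qn (m.1 + m.2)), qnD,
      mul_assoc ((-1:F) ^ m.2) (q ^ (-(pr (am m) l))), ssm, mul_sub (q ^ (-(pr (am m) l)))]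
    rw [qq, qq, se (a := (l.2 + 1) * m.2 + m.2) (b := l.2 * m.2) ⟨m.2, by ring⟩]
    rw [show (-(pr (am m) l) + -(m.1 + m.2) : ℤ) =
          l.1 + l.2 - (m.1 * l.1 - m.2 * l.2) - (m.1 + m.2) by simp only [pr, am]; try ring]
    rw [show (-(pr (am m) l) + (m.1 + m.2) : ℤ) =
          l.1 + l.2 - (m.1 * l.1 - m.2 * l.2) + (m.1 + m.2) by simp only [pr, am]; try ring]
lemma T11 (l m : ℤ × ℤ) : Tmap l m (v1 ⊗ₜ[F] v1) =
    ((-1:F) ^ (l.2 * m.2 + l.2 + m.2 + 1) *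
      q ^ (l.1 + l.2 + (m.1 + m.2) - (m.1 * l.1 - m.2 * l.2))) • (v1 ⊗ₜ[F] v1) := by
  conv_lhs => rw [← b11]
  simp only [Tmap, Module.Basis.constr_basis]
  simp only [Matrix.of_apply, Matrix.cons_val', Matrix.cons_val_zero, Matrix.cons_val_one, Matrix.head_cons,
    Matrix.empty_val', Matrix.cons_val_fin_one, Matrix.head_fin_const]
  try congr 1
  try exact sqe ⟨0, by ring⟩ (by simp only [pr, am]; try ring)

-- ================= inverse map =================
def Tinv (l m : ℤ × ℤ) : V ⊗[F] V →ₗ[F] V ⊗[F] V :=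
  bVV.constr F fun p =>
    !![ ((-1:F) ^ (l.2 * m.2) * q ^ (m.1 * l.1 - m.2 * l.2)) • (v0 ⊗ₜ[F] v0),
        ((-1:F) ^ (l.2 * m.2 + m.2) * q ^ (m.1 * l.1 - m.2 * l.2 - (m.1 + m.2))) • (v1 ⊗ₜ[F] v0)
          + ((-1:F) ^ (l.2 * m.2 + l.2 + m.2) *
              (q ^ (m.1 * l.1 - m.2 * l.2) - q ^ (m.1 * l.1 - m.2 * l.2 - 2 * (m.1 + m.2))))
            • (v0 ⊗ₜ[F] v1) ;
        ((-1:F) ^ (l.2 * m.2 + l.2) * q ^ (m.1 * l.1 - m.2 * l.2 - (l.1 + l.2))) • (v0 ⊗ₜ[F] v1),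
        ((-1:F) ^ (l.2 * m.2 + l.2 + m.2 + 1) *
          q ^ (m.1 * l.1 - m.2 * l.2 - (l.1 + l.2) - (m.1 + m.2))) • (v1 ⊗ₜ[F] v1) ]
      p.1 p.2

lemma Ti00 (l m : ℤ × ℤ) : Tinv l m (v0 ⊗ₜ[F] v0) =
    ((-1:F) ^ (l.2 * m.2) * q ^ (m.1 * l.1 - m.2 * l.2)) • (v0 ⊗ₜ[F] v0) := by
  conv_lhs => rw [← b00]
  simp only [Tinv, Module.Basis.constr_basis]
  simp only [Matrix.of_apply, Matrix.cons_val', Matrix.cons_val_zero, Matrix.cons_val_one, Matrix.head_cons,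
    Matrix.empty_val', Matrix.cons_val_fin_one, Matrix.head_fin_const]
lemma Ti01 (l m : ℤ × ℤ) : Tinv l m (v0 ⊗ₜ[F] v1) =
    ((-1:F) ^ (l.2 * m.2 + m.2) * q ^ (m.1 * l.1 - m.2 * l.2 - (m.1 + m.2))) • (v1 ⊗ₜ[F] v0)
    + ((-1:F) ^ (l.2 * m.2 + l.2 + m.2) *
        (q ^ (m.1 * l.1 - m.2 * l.2) - q ^ (m.1 * l.1 - m.2 * l.2 - 2 * (m.1 + m.2))))
      • (v0 ⊗ₜ[F] v1) := by
  conv_lhs => rw [← b01]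
  simp only [Tinv, Module.Basis.constr_basis]
  simp only [Matrix.of_apply, Matrix.cons_val', Matrix.cons_val_zero, Matrix.cons_val_one, Matrix.head_cons,
    Matrix.empty_val', Matrix.cons_val_fin_one, Matrix.head_fin_const]
lemma Ti10 (l m : ℤ × ℤ) : Tinv l m (v1 ⊗ₜ[F] v0) =
    ((-1:F) ^ (l.2 * m.2 + l.2) * q ^ (m.1 * l.1 - m.2 * l.2 - (l.1 + l.2))) • (v0 ⊗ₜ[F] v1) := by
  conv_lhs => rw [← b10]
  simp only [Tinv, Module.Basis.constr_basis]
  simp only [Matrix.of_apply, Matrix.cons_val', Matrix.cons_val_zero, Matrix.cons_val_one, Matrix.head_cons,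
    Matrix.empty_val', Matrix.cons_val_fin_one, Matrix.head_fin_const]
lemma Ti11 (l m : ℤ × ℤ) : Tinv l m (v1 ⊗ₜ[F] v1) =
    ((-1:F) ^ (l.2 * m.2 + l.2 + m.2 + 1) *
      q ^ (m.1 * l.1 - m.2 * l.2 - (l.1 + l.2) - (m.1 + m.2))) • (v1 ⊗ₜ[F] v1) := by
  conv_lhs => rw [← b11]
  simp only [Tinv, Module.Basis.constr_basis]
  simp only [Matrix.of_apply, Matrix.cons_val', Matrix.cons_val_zero, Matrix.cons_val_one, Matrix.head_cons,
    Matrix.empty_val', Matrix.cons_val_fin_one, Matrix.head_fin_const]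

/-- `T_{λ,μ}` is an equivariant isomorphism `L(λ)⊗L(μ) → L(μ)⊗L(λ)`. -/
theorem Tmap_equivariant_iso (l m : ℤ × ℤ) (hl : l.1 + l.2 ≠ 0) (hm : m.1 + m.2 ≠ 0) :
    Function.Bijective (Tmap l m) ∧
    Tmap l m ∘ₗ ΔE l m = ΔE m l ∘ₗ Tmap l m ∧
    Tmap l m ∘ₗ ΔF l m = ΔF m l ∘ₗ Tmap l m ∧
    ∀ h : ℤ × ℤ, Tmap l m ∘ₗ ΔQ l m h = ΔQ m l h ∘ₗ Tmap l m := by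
  constructor
  · -- bijectivity
    have h1 : (Tinv l m) ∘ₗ (Tmap l m) = LinearMap.id := by
      apply bVV.ext
      rintro ⟨i, j⟩
      fin_cases i <;> fin_cases j <;>
        simp only [LinearMap.coe_comp, Function.comp_apply, LinearMap.id_apply, Fin.zero_eta,
          Fin.mk_one, b00, b01, b10, b11, T00, T01, T10, T11, map_add, map_smul,
          Ti00, Ti01, Ti10, Ti11, smul_add, smul_smul]
      · exact unit_smul (by ring) _
      · exact unit_smul (by ring) _
      · rw [collect2, mix, mix', diffcancel' ⟨-m.2, by ring⟩ (by ring) (by ring), zero_smul,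
          add_zero]
        exact unit_smul (by ring) _
      · exact unit_smul (by ring) _
    have h2 : (Tmap l m) ∘ₗ (Tinv l m) = LinearMap.id := by
      apply bVV.ext
      rintro ⟨i, j⟩
      fin_cases i <;> fin_cases j <;>
        simp only [LinearMap.coe_comp, Function.comp_apply, LinearMap.id_apply, Fin.zero_eta,
          Fin.mk_one, b00, b01, b10, b11, T00, T01, T10, T11, map_add, map_smul,
          Ti00, Ti01, Ti10, Ti11, smul_add, smul_smul]
      · exact unit_smul (by ring) _
      · rw [collect2, mix, mix', diffcancel' ⟨l.2, by ring⟩ (by ring) (by ring), zero_smul,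
          add_zero]
        exact unit_smul (by ring) _
      · exact unit_smul (by ring) _
      · exact unit_smul (by ring) _
    exact Function.bijective_iff_has_inverse.mpr ⟨Tinv l m,
      fun x => by simpa using LinearMap.congr_fun h1 x,
      fun x => by simpa using LinearMap.congr_fun h2 x⟩
  refine ⟨?_, ?_, ?_⟩
  · -- E equivariance
    apply bVV.ext
    rintro ⟨i, j⟩
    fin_cases i <;> fin_cases j <;>
      simp only [LinearMap.coe_comp, Function.comp_apply, Fin.zero_eta, Fin.mk_one,
        b00, b01, b10, b11, dE00, dE01, dE10, dE11, map_add, map_smul, map_zero,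
        T00, T01, T10, T11, smul_add, smul_smul]
    · rw [smul_zero]
    · congr 1
      rw [ssm, mul_assoc, qq]
      exact sqe ⟨0, by ring⟩ (by ring)
    · rw [← add_smul]
      congr 1
      rw [sps, mq, qsm,
        se (a := l.2 * m.2 + m.2 + m.2) (b := l.2 * m.2) ⟨m.2, by ring⟩,
        show (l.1 + l.2 - (m.1 * l.1 - m.2 * l.2) - (m.1 + m.2) + -(l.1 + l.2) : ℤ)
          = -(m.1 + m.2) + -(m.1 * l.1 - m.2 * l.2) from by ring,
        show (l.1 + l.2 - (m.1 * l.1 - m.2 * l.2) + (m.1 + m.2) + -(l.1 + l.2) : ℤ)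
          = m.1 + m.2 - (m.1 * l.1 - m.2 * l.2) from by ring]
      ring
    · rw [collectY]
      congr 1
      · congr 1
        rw [ssm, mul_assoc, qq]
        exact sqe ⟨0, by ring⟩ (by ring)
      · congr 1
        rw [qsm, ssm, sps,
          se (a := l.2 + 1 + (l.2 * m.2)) (b := l.2 * m.2 + l.2 + 1) ⟨0, by ring⟩, sneg,
          se (a := l.2 * m.2 + l.2 + m.2 + 1 + (m.2 + 1)) (b := l.2 * m.2 + l.2)
            ⟨m.2 + 1, by ring⟩,
          show (l.1 + l.2 - (m.1 * l.1 - m.2 * l.2) - (m.1 + m.2) : ℤ)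
            = -(m.1 + m.2) + (l.1 + l.2 - (m.1 * l.1 - m.2 * l.2)) from by ring,
          show (l.1 + l.2 + (m.1 + m.2) - (m.1 * l.1 - m.2 * l.2) : ℤ)
            = l.1 + l.2 - (m.1 * l.1 - m.2 * l.2) + (m.1 + m.2) from by ring]
        ring
  · -- F equivariance
    apply bVV.ext
    rintro ⟨i, j⟩
    fin_cases i <;> fin_cases j <;>
      simp only [LinearMap.coe_comp, Function.comp_apply, Fin.zero_eta, Fin.mk_one,
        b00, b01, b10, b11, dF00, dF01, dF10, dF11, map_add, map_smul, map_zero,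
        T00, T01, T10, T11, smul_add, smul_smul]
    · rw [collect2]
      conv_rhs => rw [add_comm]
      congr 1
      · rw [mul_comm (qn (l.1 + l.2)), mul_assoc, mul_mul_mul_comm, ss, qqm,
          show (-(m.1 * l.1 - m.2 * l.2) + (m.1 + m.2) : ℤ)
            = m.1 + m.2 - (m.1 * l.1 - m.2 * l.2) from by ring]
      · rw [mul_left_comm (qn (l.1 + l.2)), mul_mul_mul_comm, ss,
          se (a := l.2 + (l.2 * m.2 + l.2)) (b := l.2 * m.2) ⟨l.2, by ring⟩,
          mul_right_comm (q ^ (l.1 + l.2)) (qn (m.1 + m.2)), qq,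
          mul_assoc ((-1:F) ^ (l.2 * m.2)) (q ^ (-(m.1 * l.1 - m.2 * l.2))), ← mul_add]
        congr 1
        congr 1
        exact keyqnP (m.1 * l.1 - m.2 * l.2) (l.1 + l.2) (m.1 + m.2)
    · congr 1
      rw [mul_comm (qn (l.1 + l.2)), mul_assoc, mul_mul_mul_comm, ss, qqm,
        se (a := l.2 * m.2 + l.2 + (m.2 + 1)) (b := l.2 * m.2 + l.2 + m.2 + 1) ⟨0, by ring⟩,
        show (l.1 + l.2 - (m.1 * l.1 - m.2 * l.2) + (m.1 + m.2) : ℤ)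
          = l.1 + l.2 + (m.1 + m.2) - (m.1 * l.1 - m.2 * l.2) from by ring]
    · conv_rhs => rw [← add_smul]
      congr 1
      rw [mul_mul_mul_comm ((-1:F) ^ (l.2 + 1)), ss,
        se (a := l.2 + 1 + (l.2 * m.2 + l.2 + m.2 + 1)) (b := l.2 * m.2 + m.2)
          ⟨l.2 + 1, by ring⟩,
        mul_right_comm (q ^ (l.1 + l.2)) (qn (m.1 + m.2)), qq,
        mul_mul_mul_comm ((-1:F) ^ (l.2 * m.2)), ss,
        se (a := l.2 * m.2 + (m.2 + 1)) (b := l.2 * m.2 + m.2 + 1) ⟨0, by ring⟩, sneg,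
        ← mul_assoc (q ^ (l.1 + l.2 - (m.1 * l.1 - m.2 * l.2) - (m.1 + m.2))
            - q ^ (l.1 + l.2 - (m.1 * l.1 - m.2 * l.2) + (m.1 + m.2))) (q ^ (m.1 + m.2)),
        sub_mul (q ^ (l.1 + l.2 - (m.1 * l.1 - m.2 * l.2) - (m.1 + m.2))), qq, qq,
        mul_assoc ((-1:F) ^ (l.2 * m.2 + m.2)) (q ^ (m.1 + m.2 - (m.1 * l.1 - m.2 * l.2))),
        neg_mul, ← sub_eq_add_neg, ← mul_sub]
      congr 1
      exact keyqnQ (m.1 * l.1 - m.2 * l.2) (l.1 + l.2) (m.1 + m.2)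
    · rw [smul_zero]
  · -- Q equivariance
    intro h
    apply bVV.ext
    rintro ⟨i, j⟩
    fin_cases i <;> fin_cases j <;>
      simp only [LinearMap.coe_comp, Function.comp_apply, Fin.zero_eta, Fin.mk_one,
        b00, b01, b10, b11, dQ00, dQ01, dQ10, dQ11, map_add, map_smul, map_zero,
        T00, T01, T10, T11, smul_add, smul_smul]
    · congr 1
      ring
    · congr 1
      ring
    · congr 1 <;> congr 1
      · ring
      · rw [qq, qq,
          show (h.1 * (l.1 - 1) + h.2 * (l.2 + 1) + (h.1 * m.1 + h.2 * m.2) : ℤ)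
            = h.1 * (m.1 - 1) + h.2 * (m.2 + 1) + (h.1 * l.1 + h.2 * l.2) from by ring]
        ring
    · congr 1
      ring
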